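/- Let f(u) = u·(log(1+u))^a with 1 < a < 2. Let V, φ ∈ C¹([−1,1]) be nonnegative even functions with V(0) > 0, φ(0) > 0, φ(1) = 0, with V′ ≤ 0 and φ′ ≤ 0 on [0,1/3], and with 0 ≤ V(x) ≤ V(1/3) and 0 ≤ φ(x) ≤ φ(1/3) for all x ∈ [1/3,1]. Assume in addition that φ ∈ C²([−1,1]) and that for some r ∈ (0,1) one has φ > 0 and V > 0 on [0,r] and φ″ ≥ 0 on [r,1]. Then there exists λ₀ > 0 such that for every λ ≥ λ₀, every T ∈ (0,∞], and every nonnegative classical solution u on [0,T)×[−1,1] of u_t = u_xx + V(x)f(u) with u(t,±1) = 0 and u(0,·) = λφ, one has ∂_t u(t,x) ≥ 0 for all (t,x) ∈ (0,T)×(−1,1). -/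

import Mathlib

open Set Metric Filter Topology

lemma deriv_nonpos_left {ψ : ℝ → ℝ} {d t₀ ε : ℝ} (hε : 0 < ε)
    (hd : HasDerivAt ψ d t₀) (h : ∀ s ∈ Ioo (t₀ - ε) t₀, ψ t₀ ≤ ψ s) : d ≤ 0 := by
  have hs : Tendsto (slope ψ t₀) (𝓝[<] t₀) (𝓝 d) :=
    (hasDerivAt_iff_tendsto_slope.1 hd).mono_left
      (nhdsWithin_mono _ (fun s hs => (ne_of_lt hs)))
  refine le_of_tendsto hs ?_
  have hmem : t₀ ∈ Ioc (t₀ - ε) t₀ := ⟨by linarith, le_refl _⟩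
  filter_upwards [Ioo_mem_nhdsLT_of_mem hmem] with s hsm
  have h1 : 0 ≤ ψ s - ψ t₀ := by linarith [h s hsm]
  have h2 : s - t₀ ≤ 0 := by linarith [hsm.2]
  rw [slope_def_field]
  exact div_nonpos_iff.2 (Or.inl ⟨h1, h2⟩)

lemma deriv_nonneg_right {ψ : ℝ → ℝ} {d t₀ ε : ℝ} (hε : 0 < ε)
    (hd : HasDerivAt ψ d t₀) (h : ∀ s ∈ Ioo t₀ (t₀ + ε), ψ t₀ ≤ ψ s) : 0 ≤ d := by
  have hs : Tendsto (slope ψ t₀) (𝓝[>] t₀) (𝓝 d) :=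
    (hasDerivAt_iff_tendsto_slope.1 hd).mono_left
      (nhdsWithin_mono _ (fun s hs => (ne_of_gt hs)))
  refine ge_of_tendsto hs ?_
  have hmem : t₀ ∈ Ico t₀ (t₀ + ε) := ⟨le_refl _, by linarith⟩
  filter_upwards [Ioo_mem_nhdsGT_of_mem hmem] with s hsm
  have h1 : 0 ≤ ψ s - ψ t₀ := by linarith [h s hsm]
  have h2 : 0 ≤ s - t₀ := by linarith [hsm.1]
  rw [slope_def_field]
  positivity

lemma secondDeriv_nonneg_of_isLocalMin {g : ℝ → ℝ} {x₀ : ℝ}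
    (hg : ContDiffAt ℝ 2 g x₀) (hmin : IsLocalMin g x₀) : 0 ≤ deriv (deriv g) x₀ := by
  by_contra hneg
  push_neg at hneg
  -- get open nbhd where g is C²
  obtain ⟨U, hU, hgU⟩ := hg.contDiffOn (le_refl 2) (by simp)
  obtain ⟨s, hsU, hso, hxs⟩ := _root_.mem_nhds_iff.1 hU
  have hgs : ContDiffOn ℝ 2 g s := hgU.mono hsU
  have hg'd : ContDiffOn ℝ 1 (deriv g) s :=
    hgs.deriv_of_isOpen (m := 1) hso (by norm_num)
  have hgdiff : ∀ x ∈ s, DifferentiableAt ℝ g x := fun x hx =>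
    (hgs.differentiableOn (by norm_num)).differentiableAt (hso.mem_nhds hx)
  have hg'x : HasDerivAt (deriv g) (deriv (deriv g) x₀) x₀ :=
    ((hg'd.differentiableOn (by norm_num)).differentiableAt (hso.mem_nhds hxs)).hasDerivAt
  have hfermat : deriv g x₀ = 0 :=
    hmin.deriv_eq_zero
  -- slope of deriv g tends to deriv (deriv g) x₀ < 0; so deriv g < 0 just right of x₀
  have hs2 : Tendsto (slope (deriv g) x₀) (𝓝[>] x₀) (𝓝 (deriv (deriv g) x₀)) :=
    (hasDerivAt_iff_tendsto_slope.1 hg'x).mono_left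
      (nhdsWithin_mono _ (fun s hs => (ne_of_gt hs)))
  have hev : ∀ᶠ x in 𝓝[>] x₀, deriv g x < 0 := by
    filter_upwards [hs2.eventually (Filter.Tendsto.eventually_lt_const hneg tendsto_id |>.mono (fun _ h => h)), self_mem_nhdsWithin] with x hx hx'
    have hxpos : 0 < x - x₀ := sub_pos.2 hx'
    have : slope (deriv g) x₀ x < 0 := hx
    rw [slope_def_field, hfermat, sub_zero] at this
    have h2 := mul_neg_of_neg_of_pos this hxpos
    rwa [div_mul_cancel₀ _ (ne_of_gt hxpos)] at h2
  obtain ⟨ε₁, hε₁, hball'⟩ := Metric.mem_nhdsWithin_iff.1 hev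
  have hball : ∀ x, |x - x₀| < ε₁ → x₀ < x → deriv g x < 0 := fun x h1 h2 =>
    hball' ⟨by simpa [Real.dist_eq] using h1, h2⟩
  obtain ⟨ε₂, hε₂, hmin'⟩ := Metric.eventually_nhds_iff.1 (hmin : ∀ᶠ y in 𝓝 x₀, g x₀ ≤ g y)
  obtain ⟨ε₃, hε₃, hball3⟩ := Metric.mem_nhds_iff.1 (hso.mem_nhds hxs)
  set ε := min ε₁ (min ε₂ ε₃) with hεdef
  have hεpos : 0 < ε := lt_min hε₁ (lt_min hε₂ hε₃)
  -- g is strictly decreasing on [x₀, x₀ + ε/2]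
  have hanti : StrictAntiOn g (Icc x₀ (x₀ + ε/2)) := by
    apply strictAntiOn_of_deriv_neg (convex_Icc _ _)
    · refine hgs.continuousOn.mono fun x hx => hball3 ?_
      simp only [Metric.mem_ball, Real.dist_eq, abs_lt]
      have h3 : ε ≤ ε₃ := le_trans (min_le_right _ _) (min_le_right _ _)
      constructor <;> linarith [hx.1, hx.2, hε₃]
    · intro x hx
      rw [interior_Icc] at hx
      apply hball
      · have : ε ≤ ε₁ := min_le_left _ _
        rw [abs_lt]; constructor <;> linarith [hx.1, hx.2]
      · exact hx.1
  have hlt : g (x₀ + ε/4) < g x₀ :=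
    hanti (by constructor <;> linarith) (by constructor <;> linarith) (by linarith)
  have h2 : ε ≤ ε₂ := le_trans (min_le_right _ _) (min_le_left _ _)
  have hge : g x₀ ≤ g (x₀ + ε/4) := by
    apply hmin'
    rw [Real.dist_eq, abs_lt]
    constructor <;> linarith
  linarith

lemma max_principle {T' K : ℝ} (hT' : 0 < T') (w : ℝ → ℝ → ℝ)
    (hw_cont : ContinuousOn (fun q : ℝ × ℝ => w q.1 q.2) (Icc 0 T' ×ˢ Icc (-1:ℝ) 1))
    (h0 : ∀ x ∈ Icc (-1:ℝ) 1, 0 ≤ w 0 x)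
    (hbd : ∀ t ∈ Icc (0:ℝ) T', 0 ≤ w t (-1) ∧ 0 ≤ w t 1)
    (hpde : ∀ t, 0 < t → t ≤ T' → ∀ x ∈ Ioo (-1:ℝ) 1, w t x < 0 →
      ∃ d, HasDerivAt (fun s => w s x) d t ∧ ContDiffAt ℝ 2 (w t) x ∧
        deriv (deriv (w t)) x + K * w t x ≤ d) :
    ∀ t ∈ Icc (0:ℝ) T', ∀ x ∈ Icc (-1:ℝ) 1, 0 ≤ w t x := by
  intro t ht x hx
  by_contra hwneg
  push_neg at hwneg
  set D : Set (ℝ × ℝ) := Icc (0:ℝ) T' ×ˢ Icc (-1:ℝ) 1 with hD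
  have hDc : IsCompact D := (isCompact_Icc).prod isCompact_Icc
  have hDne : D.Nonempty := ⟨(t, x), ht, hx⟩
  set W : ℝ × ℝ → ℝ := fun q => Real.exp (-(K+1) * q.1) * w q.1 q.2 with hW
  have hWcont : ContinuousOn W D := by
    apply ContinuousOn.mul
    · exact ((Real.continuous_exp.comp (continuous_const.mul continuous_fst)).continuousOn)
    · exact hw_cont
  obtain ⟨q₀, hq₀D, hminW⟩ := hDc.exists_isMinOn hDne hWcont
  obtain ⟨t₀, x₀⟩ := q₀
  obtain ⟨ht₀, hx₀⟩ := hq₀D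
  change t₀ ∈ Icc (0:ℝ) T' at ht₀
  change x₀ ∈ Icc (-1:ℝ) 1 at hx₀
  have hminW' : ∀ q ∈ D, W (t₀, x₀) ≤ W q := fun q hq => hminW hq
  have hWtx : W (t, x) < 0 := by
    have := Real.exp_pos (-(K+1) * t)
    exact mul_neg_of_pos_of_neg this hwneg
  have hW₀neg : W (t₀, x₀) < 0 := lt_of_le_of_lt (hminW' (t, x) ⟨ht, hx⟩) hWtx
  have hE₀ : (0:ℝ) < Real.exp (-(K+1) * t₀) := Real.exp_pos _
  have hw₀neg : w t₀ x₀ < 0 := by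
    by_contra h
    push_neg at h
    exact absurd (mul_nonneg hE₀.le h) (not_le.2 hW₀neg)
  -- t₀ > 0
  have ht₀pos : 0 < t₀ := by
    rcases eq_or_lt_of_le ht₀.1 with h | h
    · exact absurd (h0 x₀ hx₀) (by rw [← h] at hw₀neg; exact not_le.2 hw₀neg)
    · exact h
  -- x₀ interior
  have hx₀int : x₀ ∈ Ioo (-1:ℝ) 1 := by
    rcases eq_or_lt_of_le hx₀.1 with h | h
    · exact absurd ((hbd t₀ ht₀).1) (by rw [h]; exact not_le.2 hw₀neg)
    rcases eq_or_lt_of_le hx₀.2 with h2 | h2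
    · exact absurd ((hbd t₀ ht₀).2) (by rw [← h2]; exact not_le.2 hw₀neg)
    exact ⟨h, h2⟩
  obtain ⟨d, hdt, hC2, hineq⟩ := hpde t₀ ht₀pos ht₀.2 x₀ hx₀int hw₀neg
  -- time direction
  have hexp : HasDerivAt (fun s : ℝ => Real.exp (-(K+1) * s)) (Real.exp (-(K+1) * t₀) * (-(K+1))) t₀ := by
    simpa using ((hasDerivAt_id t₀).const_mul (-(K+1))).exp
  have hψ : HasDerivAt (fun s => Real.exp (-(K+1) * s) * w s x₀)
      (Real.exp (-(K+1) * t₀) * (-(K+1)) * w t₀ x₀ + Real.exp (-(K+1) * t₀) * d) t₀ :=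
    hexp.mul hdt
  have hdle : Real.exp (-(K+1) * t₀) * (-(K+1)) * w t₀ x₀ + Real.exp (-(K+1) * t₀) * d ≤ 0 := by
    apply deriv_nonpos_left ht₀pos hψ
    intro s hs
    have hsD : (s, x₀) ∈ D := ⟨⟨by linarith [hs.1], le_of_lt (lt_of_lt_of_le hs.2 ht₀.2)⟩, hx₀⟩
    exact hminW' (s, x₀) hsD
  have hd1 : d ≤ (K+1) * w t₀ x₀ := by
    have h2 : Real.exp (-(K+1) * t₀) * d ≤ Real.exp (-(K+1) * t₀) * ((K+1) * w t₀ x₀) := by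
      nlinarith [hdle]
    exact le_of_mul_le_mul_left h2 hE₀
  -- space direction
  have hloc : IsLocalMin (w t₀) x₀ := by
    have hmem : Ioo (-1:ℝ) 1 ∈ 𝓝 x₀ := isOpen_Ioo.mem_nhds hx₀int
    filter_upwards [hmem] with y hy
    have hyD : (t₀, y) ∈ D := ⟨ht₀, ⟨hy.1.le, hy.2.le⟩⟩
    have := hminW' (t₀, y) hyD
    exact le_of_mul_le_mul_left this hE₀
  have hsd : 0 ≤ deriv (deriv (w t₀)) x₀ := secondDeriv_nonneg_of_isLocalMin hC2 hloc
  linarith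

lemma f_hasDerivAt {a : ℝ} (ha1 : 1 ≤ a) {u : ℝ} (hu : 0 ≤ u) :
    HasDerivAt (fun v => v * Real.log (1 + v) ^ a)
      (Real.log (1 + u) ^ a + u * (a * Real.log (1 + u) ^ (a - 1) * (1 + u)⁻¹)) u := by
  have h1u : (1:ℝ) + u ≠ 0 := by positivity
  have h1 : HasDerivAt (fun v : ℝ => 1 + v) 1 u := by
    simpa using (hasDerivAt_id u).const_add 1
  have h2 : HasDerivAt (fun v : ℝ => Real.log (1 + v)) ((1 + u)⁻¹ * 1) u :=
    (Real.hasDerivAt_log h1u).comp u h1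
  have h3 : HasDerivAt (fun y : ℝ => y ^ a) (a * Real.log (1 + u) ^ (a - 1)) (Real.log (1 + u)) :=
    Real.hasDerivAt_rpow_const (Or.inr ha1)
  have h4 : HasDerivAt (fun v : ℝ => Real.log (1 + v) ^ a)
      (a * Real.log (1 + u) ^ (a - 1) * ((1 + u)⁻¹ * 1)) u := by have := h3.comp u h2; exact this
  have h5 : HasDerivAt (fun v => v * Real.log (1 + v) ^ a) (1 * Real.log (1 + u) ^ a + u * (a * Real.log (1 + u) ^ (a - 1) * ((1 + u)⁻¹ * 1))) u := (hasDerivAt_id' u).mul h4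
  convert h5 using 1
  ring

lemma f_lip {a : ℝ} (ha1 : 1 ≤ a) {B : ℝ} (hB : 0 ≤ B) :
    ∃ L, 0 ≤ L ∧ ∀ x ∈ Icc (0:ℝ) B, ∀ y ∈ Icc (0:ℝ) B,
      |x * Real.log (1 + x) ^ a - y * Real.log (1 + y) ^ a| ≤ L * |x - y| := by
  set L : ℝ := Real.log (1 + B) ^ a + a * (B * Real.log (1 + B) ^ (a - 1)) with hL
  have hlogB : 0 ≤ Real.log (1 + B) := Real.log_nonneg (by linarith)
  have hLnn : 0 ≤ L := by
    have : (0:ℝ) ≤ a := by linarith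
    positivity
  refine ⟨L, hLnn, ?_⟩
  intro x hx y hy
  have key : ∀ u ∈ Icc (0:ℝ) B,
      ‖Real.log (1 + u) ^ a + u * (a * Real.log (1 + u) ^ (a - 1) * (1 + u)⁻¹)‖ ≤ L := by
    intro u hu
    have hlogu : 0 ≤ Real.log (1 + u) := Real.log_nonneg (by linarith [hu.1])
    have hmono : Real.log (1 + u) ≤ Real.log (1 + B) :=
      Real.log_le_log (by linarith [hu.1]) (by linarith [hu.2])
    have h1 : Real.log (1 + u) ^ a ≤ Real.log (1 + B) ^ a :=
      Real.rpow_le_rpow hlogu hmono (by linarith)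
    have h2 : Real.log (1 + u) ^ (a - 1) ≤ Real.log (1 + B) ^ (a - 1) :=
      Real.rpow_le_rpow hlogu hmono (by linarith)
    have hinv : (1 + u)⁻¹ ≤ 1 := by
      rw [inv_le_one_iff₀]; right; linarith [hu.1]
    have hup : (0:ℝ) < 1 + u := by linarith [hu.1]
    have ha0 : (0:ℝ) ≤ a := by linarith
    have hnn : 0 ≤ Real.log (1 + u) ^ a + u * (a * Real.log (1 + u) ^ (a - 1) * (1 + u)⁻¹) := by
      have q1 : (0:ℝ) ≤ Real.log (1 + u) ^ a := Real.rpow_nonneg hlogu _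
      have q2 : (0:ℝ) ≤ u * (a * Real.log (1 + u) ^ (a - 1) * (1 + u)⁻¹) :=
        mul_nonneg hu.1 (mul_nonneg (mul_nonneg ha0 (Real.rpow_nonneg hlogu _))
          (inv_nonneg.2 hup.le))
      linarith
    rw [Real.norm_eq_abs, abs_of_nonneg hnn]
    have t1 : u * (a * Real.log (1 + u) ^ (a - 1) * (1 + u)⁻¹) ≤
        a * (B * Real.log (1 + B) ^ (a - 1)) := by
      have hru : (0:ℝ) ≤ Real.log (1 + u) ^ (a - 1) := Real.rpow_nonneg hlogu _
      have hrB : (0:ℝ) ≤ Real.log (1 + B) ^ (a - 1) := Real.rpow_nonneg hlogB _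
      have : u * (a * Real.log (1 + u) ^ (a - 1) * (1 + u)⁻¹) ≤
          u * (a * Real.log (1 + u) ^ (a - 1)) := by
        apply mul_le_mul_of_nonneg_left _ hu.1
        nlinarith [mul_nonneg ha0 hru, inv_nonneg.2 hup.le]
      refine this.trans ?_
      calc u * (a * Real.log (1 + u) ^ (a - 1)) ≤ B * (a * Real.log (1 + B) ^ (a - 1)) := by
            apply mul_le_mul hu.2 _ (by positivity) hB
            exact mul_le_mul_of_nonneg_left h2 ha0
        _ = a * (B * Real.log (1 + B) ^ (a - 1)) := by ring
    linarith
  have hder : ∀ u ∈ Icc (0:ℝ) B, HasDerivWithinAt (fun v => v * Real.log (1 + v) ^ a)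
      (Real.log (1 + u) ^ a + u * (a * Real.log (1 + u) ^ (a - 1) * (1 + u)⁻¹)) (Icc 0 B) u :=
    fun u hu => (f_hasDerivAt ha1 hu.1).hasDerivWithinAt
  have := (convex_Icc (0:ℝ) B).norm_image_sub_le_of_norm_hasDerivWithin_le hder key hy hx
  simpa [Real.norm_eq_abs] using this

lemma itd2_eq_deriv2 (φ : ℝ → ℝ) {x : ℝ} (hx : x ∈ Ioo (-1:ℝ) 1) :
    iteratedDerivWithin 2 φ (Icc (-1) 1) x = deriv (deriv φ) x := by
  have hmem : Icc (-1:ℝ) 1 ∈ 𝓝 x := Icc_mem_nhds hx.1 hx.2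
  have h : Icc (-1:ℝ) 1 =ᶠ[𝓝 x] (univ : Set ℝ) := by
    filter_upwards [hmem] with y hy
    simp only [eq_iff_iff]; exact iff_of_true hy trivial
  have e1 : iteratedDerivWithin 2 φ (Icc (-1) 1) x = iteratedDerivWithin 2 φ univ x := by
    simp only [iteratedDerivWithin_eq_iteratedFDerivWithin]
    rw [iteratedFDerivWithin_congr_set h]
  rw [e1, iteratedDerivWithin_univ]
  rw [show (2:ℕ) = 1 + 1 from rfl, iteratedDeriv_succ, iteratedDeriv_one]

lemma even_deriv2 {φ : ℝ → ℝ} (hφ_even : ∀ y ∈ Icc (-1:ℝ) 1, φ (-y) = φ y)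
    {x : ℝ} (hx : x ∈ Ioo (-1:ℝ) 1) :
    deriv (deriv φ) x = deriv (deriv φ) (-x) := by
  have hmem : Ioo (-1:ℝ) 1 ∈ 𝓝 x := isOpen_Ioo.mem_nhds hx
  have hev : φ =ᶠ[𝓝 x] fun y => φ (-y) := by
    filter_upwards [hmem] with y hy
    exact (hφ_even y ⟨hy.1.le, hy.2.le⟩).symm
  have h1 : deriv (deriv φ) x = deriv (deriv (fun y => φ (-y))) x :=
    Filter.EventuallyEq.deriv_eq (Filter.EventuallyEq.deriv hev)
  rw [h1]
  have h2 : (deriv fun y => φ (-y)) = fun y => -deriv φ (-y) :=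
    funext fun y => deriv_comp_neg φ y
  rw [h2]
  have h3 : deriv (fun y => -deriv φ (-y)) x = -deriv (fun y => deriv φ (-y)) x := deriv.neg
  rw [h3, deriv_comp_neg (deriv φ) x, neg_neg]

lemma c2_aux {f : ℝ → ℝ} {x : ℝ} (hf : ContDiffAt ℝ 2 f x) :
    ∃ s : Set ℝ, IsOpen s ∧ x ∈ s ∧ (∀ y ∈ s, DifferentiableAt ℝ f y) ∧
      DifferentiableAt ℝ (deriv f) x := by
  obtain ⟨U, hU, hgU⟩ := hf.contDiffOn (le_refl 2) (by simp)
  obtain ⟨s, hsU, hso, hxs⟩ := _root_.mem_nhds_iff.1 hU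
  have hgs : ContDiffOn ℝ 2 f s := hgU.mono hsU
  refine ⟨s, hso, hxs, fun y hy =>
    (hgs.differentiableOn (by norm_num)).differentiableAt (hso.mem_nhds hy), ?_⟩
  exact ((hgs.deriv_of_isOpen (m := 1) hso (by norm_num)).differentiableOn
    (by norm_num)).differentiableAt (hso.mem_nhds hxs)

lemma deriv2_sub {f g : ℝ → ℝ} {x : ℝ} (hf : ContDiffAt ℝ 2 f x) (hg : ContDiffAt ℝ 2 g x) :
    deriv (deriv (fun y => f y - g y)) x = deriv (deriv f) x - deriv (deriv g) x := by
  obtain ⟨s, hso, hxs, hsdiff, hsd'⟩ := c2_aux hf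
  obtain ⟨s', hso', hxs', hsdiff', hsd''⟩ := c2_aux hg
  have hev : (deriv fun y => f y - g y) =ᶠ[𝓝 x] fun y => deriv f y - deriv g y := by
    filter_upwards [hso.mem_nhds hxs, hso'.mem_nhds hxs'] with y hy hy'
    exact deriv_sub (hsdiff y hy) (hsdiff' y hy')
  rw [Filter.EventuallyEq.deriv_eq hev]
  exact deriv_sub hsd' hsd''

lemma subsol (a : ℝ) (ha1 : 1 < a) (V φ : ℝ → ℝ)
    (hV_cont : ContinuousOn V (Icc (-1) 1))
    (hV_nonneg : ∀ x ∈ Icc (-1:ℝ) 1, 0 ≤ V x)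
    (hV_even : ∀ x ∈ Icc (-1:ℝ) 1, V (-x) = V x)
    (hφ_nonneg : ∀ x ∈ Icc (-1:ℝ) 1, 0 ≤ φ x)
    (hφ_even : ∀ x ∈ Icc (-1:ℝ) 1, φ (-x) = φ x)
    (hφ_C2 : ContDiffOn ℝ 2 φ (Icc (-1) 1))
    (r : ℝ) (hr : r ∈ Ioo (0:ℝ) 1)
    (hφpos : ∀ x ∈ Icc (0:ℝ) r, 0 < φ x) (hVpos : ∀ x ∈ Icc (0:ℝ) r, 0 < V x)
    (hφ'' : ∀ x ∈ Icc r (1:ℝ), 0 ≤ iteratedDerivWithin 2 φ (Icc (-1) 1) x) :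
    ∃ lam₀ : ℝ, 1 ≤ lam₀ ∧ ∀ lam, lam₀ ≤ lam → ∀ x ∈ Ioo (-1:ℝ) 1,
      0 ≤ lam * deriv (deriv φ) x + V x * ((lam * φ x) * Real.log (1 + lam * φ x) ^ a) := by
  have ha0 : (0:ℝ) ≤ a := by linarith
  have hsub : Icc (0:ℝ) r ⊆ Icc (-1:ℝ) 1 := fun y hy =>
    ⟨by linarith [hy.1], by linarith [hy.2, hr.2.le]⟩
  -- bound on second derivative
  have hcont2 : ContinuousOn (iteratedDerivWithin 2 φ (Icc (-1) 1)) (Icc (-1) 1) :=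
    hφ_C2.continuousOn_iteratedDerivWithin (le_refl _) (uniqueDiffOn_Icc (by norm_num))
  obtain ⟨M, hM⟩ := isCompact_Icc.exists_bound_of_continuousOn hcont2
  have hM0 : 0 ≤ M := le_trans (norm_nonneg _) (hM 0 ⟨by norm_num, by norm_num⟩)
  -- minima of φ and V on [0, r]
  have hne : (Icc (0:ℝ) r).Nonempty := ⟨0, le_refl _, hr.1.le⟩
  obtain ⟨xφ, hxφ, hminφ⟩ := isCompact_Icc.exists_isMinOn hne (hφ_C2.continuousOn.mono hsub)
  obtain ⟨xV, hxV, hminV⟩ := isCompact_Icc.exists_isMinOn hne (hV_cont.mono hsub)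
  set δφ := φ xφ with hδφdef
  set δV := V xV with hδVdef
  have hδφ : 0 < δφ := hφpos xφ hxφ
  have hδV : 0 < δV := hVpos xV hxV
  have hφmin : ∀ y ∈ Icc (0:ℝ) r, δφ ≤ φ y := fun y hy => hminφ hy
  have hVmin : ∀ y ∈ Icc (0:ℝ) r, δV ≤ V y := fun y hy => hminV hy
  set c : ℝ := (M / (δV * δφ)) ^ (a⁻¹) with hcdef
  have hc0 : 0 ≤ c := Real.rpow_nonneg (by positivity) _
  set lam₀ : ℝ := max 1 ((Real.exp c - 1) / δφ + 1) with hlamdef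
  refine ⟨lam₀, le_max_left _ _, ?_⟩
  have key : ∀ lam, lam₀ ≤ lam → M ≤ δV * δφ * Real.log (1 + lam * δφ) ^ a := by
    intro lam hlam
    have h1 : (Real.exp c - 1) / δφ + 1 ≤ lam := le_trans (le_max_right _ _) hlam
    have h2 : Real.exp c - 1 + δφ ≤ lam * δφ := by
      have := mul_le_mul_of_nonneg_right h1 hδφ.le
      rwa [add_mul, one_mul, div_mul_cancel₀ _ (ne_of_gt hδφ)] at this
    have h3 : Real.exp c ≤ 1 + lam * δφ := by linarith
    have h4 : c ≤ Real.log (1 + lam * δφ) := by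
      have := Real.log_le_log (Real.exp_pos c) h3
      rwa [Real.log_exp] at this
    have h5 : c ^ a ≤ Real.log (1 + lam * δφ) ^ a := Real.rpow_le_rpow hc0 h4 ha0
    have h6 : c ^ a = M / (δV * δφ) :=
      Real.rpow_inv_rpow (by positivity) (by linarith)
    rw [h6] at h5
    have := mul_le_mul_of_nonneg_left h5 (by positivity : (0:ℝ) ≤ δV * δφ)
    rwa [mul_div_cancel₀ _ (by positivity : δV * δφ ≠ 0)] at this
  intro lam hlam x hx
  have hlam1 : (1:ℝ) ≤ lam := le_trans (le_max_left _ _) hlam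
  have hxIcc : x ∈ Icc (-1:ℝ) 1 := ⟨hx.1.le, hx.2.le⟩
  -- reduce to y = |x|
  set y := |x| with hydef
  have hy0 : 0 ≤ y := abs_nonneg x
  have hy1 : y < 1 := abs_lt.2 ⟨hx.1, hx.2⟩
  have hyIoo : y ∈ Ioo (-1:ℝ) 1 := ⟨by linarith, hy1⟩
  have hyIcc : y ∈ Icc (-1:ℝ) 1 := ⟨by linarith, hy1.le⟩
  have hφeq : φ x = φ y := by
    rcases abs_choice x with h | h
    · rw [hydef, h]
    · rw [hydef, h, hφ_even x hxIcc]
  have hVeq : V x = V y := by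
    rcases abs_choice x with h | h
    · rw [hydef, h]
    · rw [hydef, h, hV_even x hxIcc]
  have hDeq : deriv (deriv φ) x = deriv (deriv φ) y := by
    rcases abs_choice x with h | h
    · rw [hydef, h]
    · rw [hydef, h]
      exact even_deriv2 hφ_even hx
  rw [hφeq, hVeq, hDeq]
  have hlogpos : 0 ≤ Real.log (1 + lam * φ y) := by
    apply Real.log_nonneg
    have := hφ_nonneg y hyIcc
    nlinarith
  rcases le_or_gt r y with hcase | hcase
  · -- convex region
    have hD : 0 ≤ deriv (deriv φ) y := by
      rw [← itd2_eq_deriv2 φ hyIoo]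
      exact hφ'' y ⟨hcase, hy1.le⟩
    have hterm : 0 ≤ V y * ((lam * φ y) * Real.log (1 + lam * φ y) ^ a) := by
      apply mul_nonneg (hV_nonneg y hyIcc)
      apply mul_nonneg (mul_nonneg (by linarith) (hφ_nonneg y hyIcc))
      exact Real.rpow_nonneg hlogpos _
    nlinarith
  · -- region near 0
    have hyr : y ∈ Icc (0:ℝ) r := ⟨hy0, hcase.le⟩
    have hφy : δφ ≤ φ y := hφmin y hyr
    have hVy : δV ≤ V y := hVmin y hyr
    have hD : -M ≤ deriv (deriv φ) y := by
      rw [← itd2_eq_deriv2 φ hyIoo]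
      have := hM y hyIcc
      rw [Real.norm_eq_abs] at this
      linarith [(abs_le.1 this).1]
    have hlog2 : Real.log (1 + lam * δφ) ≤ Real.log (1 + lam * φ y) := by
      apply Real.log_le_log (by positivity)
      nlinarith
    have hlog2nn : 0 ≤ Real.log (1 + lam * δφ) := by
      apply Real.log_nonneg; nlinarith
    have hrpow : Real.log (1 + lam * δφ) ^ a ≤ Real.log (1 + lam * φ y) ^ a :=
      Real.rpow_le_rpow hlog2nn hlog2 ha0
    have hchain : lam * (δV * δφ * Real.log (1 + lam * δφ) ^ a) ≤
        V y * ((lam * φ y) * Real.log (1 + lam * φ y) ^ a) := by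
      have e1 : lam * (δV * δφ * Real.log (1 + lam * δφ) ^ a) =
          δV * ((lam * δφ) * Real.log (1 + lam * δφ) ^ a) := by ring
      rw [e1]
      apply mul_le_mul hVy _ _ (le_trans hδV.le hVy)
      · apply mul_le_mul
        · nlinarith
        · exact hrpow
        · exact Real.rpow_nonneg hlog2nn _
        · exact mul_nonneg (by linarith : (0:ℝ) ≤ lam) (hφ_nonneg y hyIcc)
      · apply mul_nonneg (by positivity) (Real.rpow_nonneg hlog2nn _)
    have hkey := key lam hlam
    have h7 : lam * M ≤ lam * (δV * δφ * Real.log (1 + lam * δφ) ^ a) :=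
      mul_le_mul_of_nonneg_left hkey (by linarith)
    nlinarith

set_option maxHeartbeats 1000000 in
theorem stmt17
    (a : ℝ) (ha1 : 1 < a) (ha2 : a < 2)
    (V φ : ℝ → ℝ)
    (hV_C1 : ContDiffOn ℝ 1 V (Icc (-1) 1)) (hφ_C1 : ContDiffOn ℝ 1 φ (Icc (-1) 1))
    (hV_nonneg : ∀ x ∈ Icc (-1:ℝ) 1, 0 ≤ V x) (hφ_nonneg : ∀ x ∈ Icc (-1:ℝ) 1, 0 ≤ φ x)
    (hV_even : ∀ x ∈ Icc (-1:ℝ) 1, V (-x) = V x) (hφ_even : ∀ x ∈ Icc (-1:ℝ) 1, φ (-x) = φ x)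
    (hV0 : 0 < V 0) (hφ0 : 0 < φ 0) (hφ1 : φ 1 = 0)
    (hV' : ∀ x ∈ Icc (0:ℝ) (1/3), derivWithin V (Icc (-1) 1) x ≤ 0)
    (hφ' : ∀ x ∈ Icc (0:ℝ) (1/3), derivWithin φ (Icc (-1) 1) x ≤ 0)
    (hVbd : ∀ x ∈ Icc (1/3:ℝ) 1, V x ≤ V (1/3))
    (hφbd : ∀ x ∈ Icc (1/3:ℝ) 1, φ x ≤ φ (1/3))
    (hφ_C2 : ContDiffOn ℝ 2 φ (Icc (-1) 1))
    (r : ℝ) (hr : r ∈ Ioo (0:ℝ) 1)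
    (hφpos : ∀ x ∈ Icc (0:ℝ) r, 0 < φ x) (hVpos : ∀ x ∈ Icc (0:ℝ) r, 0 < V x)
    (hφ'' : ∀ x ∈ Icc r (1:ℝ), 0 ≤ iteratedDerivWithin 2 φ (Icc (-1) 1) x)
    :
    ∃ lam₀ > 0, ∀ lam ≥ lam₀, ∀ T : EReal, 0 < T →
      ∀ u : ℝ → ℝ → ℝ,
        ContinuousOn (fun q : ℝ × ℝ => u q.1 q.2)
          {q : ℝ × ℝ | 0 ≤ q.1 ∧ (q.1 : EReal) < T ∧ q.2 ∈ Icc (-1:ℝ) 1} →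
        (∀ t : ℝ, 0 ≤ t → (t : EReal) < T → ∀ x ∈ Icc (-1:ℝ) 1, 0 ≤ u t x) →
        (∀ t : ℝ, 0 < t → (t : EReal) < T → ∀ x ∈ Ioo (-1:ℝ) 1,
          DifferentiableAt ℝ (fun s => u s x) t ∧ ContDiffAt ℝ 2 (u t) x ∧
          deriv (fun s => u s x) t = deriv (deriv (u t)) x + V x * (u t x * Real.log (1 + u t x) ^ a)) →
        (∀ t : ℝ, 0 < t → (t : EReal) < T → u t (-1) = 0 ∧ u t 1 = 0) →
        (∀ x ∈ Icc (-1:ℝ) 1, u 0 x = lam * φ x) →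
        ∀ t : ℝ, 0 < t → (t : EReal) < T → ∀ x ∈ Ioo (-1:ℝ) 1,
          0 ≤ deriv (fun s => u s x) t := by
  -- global bounds on V and φ
  obtain ⟨Vm, hVm⟩ := isCompact_Icc.exists_bound_of_continuousOn hV_C1.continuousOn
  obtain ⟨Φm, hΦm⟩ := isCompact_Icc.exists_bound_of_continuousOn hφ_C1.continuousOn
  have hVm0 : 0 ≤ Vm := le_trans (norm_nonneg _) (hVm 0 ⟨by norm_num, by norm_num⟩)
  have hΦm0 : 0 ≤ Φm := le_trans (norm_nonneg _) (hΦm 0 ⟨by norm_num, by norm_num⟩)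
  have hφm1 : φ (-1) = 0 := by
    have := hφ_even 1 ⟨by norm_num, le_refl 1⟩
    rw [this, hφ1]
  obtain ⟨lam₀, hlam₀1, hsubsol⟩ := subsol a ha1 V φ hV_C1.continuousOn hV_nonneg hV_even
    hφ_nonneg hφ_even hφ_C2 r hr hφpos hVpos hφ''
  refine ⟨lam₀, by linarith, ?_⟩
  intro lam hlam T hT u hu_cont hu_nn hu_pde hu_bc hu_ic
  have hlam1 : (1:ℝ) ≤ lam := le_trans hlam₀1 hlam
  have hφ_bc : lam * φ 1 = 0 ∧ lam * φ (-1) = 0 := by rw [hφ1, hφm1]; norm_num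
  -- Claim 1 : u t' ≥ lam φ
  have claim1 : ∀ t' : ℝ, 0 ≤ t' → (t' : EReal) < T → ∀ y ∈ Icc (-1:ℝ) 1,
      lam * φ y ≤ u t' y := by
    intro t' ht'0 ht'T y hy
    rcases eq_or_lt_of_le ht'0 with h0 | h0
    · rw [← h0, hu_ic y hy]
    have hsubset : Icc 0 t' ×ˢ Icc (-1:ℝ) 1 ⊆
        {q : ℝ × ℝ | 0 ≤ q.1 ∧ (q.1 : EReal) < T ∧ q.2 ∈ Icc (-1:ℝ) 1} := by
      rintro ⟨s, z⟩ ⟨hs, hz⟩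
      exact ⟨hs.1, lt_of_le_of_lt (EReal.coe_le_coe_iff.2 hs.2) ht'T, hz⟩
    obtain ⟨Bu, hBu⟩ := (isCompact_Icc.prod isCompact_Icc).exists_bound_of_continuousOn
      (hu_cont.mono hsubset)
    have hBu0 : 0 ≤ Bu := le_trans (norm_nonneg _)
      (hBu (0, 0) ⟨⟨le_refl _, h0.le⟩, by norm_num⟩)
    set B : ℝ := max Bu (lam * Φm) with hBdef
    have hB0 : 0 ≤ B := le_trans hBu0 (le_max_left _ _)
    have huB : ∀ s ∈ Icc (0:ℝ) t', ∀ z ∈ Icc (-1:ℝ) 1, u s z ∈ Icc (0:ℝ) B := by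
      intro s hs z hz
      refine ⟨hu_nn s hs.1 (lt_of_le_of_lt (EReal.coe_le_coe_iff.2 hs.2) ht'T) z hz, ?_⟩
      have := hBu (s, z) ⟨hs, hz⟩
      rw [Real.norm_eq_abs] at this
      exact le_trans (le_abs_self _) (le_trans this (le_max_left _ _))
    have hφB : ∀ z ∈ Icc (-1:ℝ) 1, lam * φ z ∈ Icc (0:ℝ) B := by
      intro z hz
      refine ⟨mul_nonneg (by linarith) (hφ_nonneg z hz), ?_⟩
      have h1 : φ z ≤ Φm := by
        have := hΦm z hz; rw [Real.norm_eq_abs] at this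
        exact le_trans (le_abs_self _) this
      exact le_trans (mul_le_mul_of_nonneg_left h1 (by linarith)) (le_max_right _ _)
    obtain ⟨L, hL0, hLip⟩ := f_lip ha1.le hB0
    have key := max_principle (T' := t') (K := Vm * L) h0
      (fun s z => u s z - lam * φ z) ?_ ?_ ?_ ?_
    · have := key t' ⟨ht'0, le_refl _⟩ y hy
      linarith
    · apply ContinuousOn.sub (hu_cont.mono hsubset)
      exact continuousOn_const.mul (hφ_C1.continuousOn.comp continuous_snd.continuousOn
        (fun q hq => hq.2))
    · intro z hz
      show 0 ≤ u 0 z - lam * φ z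
      rw [hu_ic z hz]
      simp
    · intro s hs
      show 0 ≤ u s (-1) - lam * φ (-1) ∧ 0 ≤ u s 1 - lam * φ 1
      have hsT : (s : EReal) < T := lt_of_le_of_lt (EReal.coe_le_coe_iff.2 hs.2) ht'T
      rcases eq_or_lt_of_le hs.1 with hs0 | hs0
      · rw [← hs0, hu_ic 1 ⟨by norm_num, le_refl _⟩, hu_ic (-1) ⟨le_refl _, by norm_num⟩,
          hφ1, hφm1]
        norm_num
      · obtain ⟨hb1, hb2⟩ := hu_bc s hs0 hsT
        rw [hb1, hb2, hφ1, hφm1]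
        norm_num
    · intro s hs0 hst' z hz hwneg
      have hwn : u s z - lam * φ z < 0 := hwneg
      have hsT : (s : EReal) < T := lt_of_le_of_lt (EReal.coe_le_coe_iff.2 hst') ht'T
      obtain ⟨hdiff, hC2, heq⟩ := hu_pde s hs0 hsT z hz
      have hzIcc : z ∈ Icc (-1:ℝ) 1 := ⟨hz.1.le, hz.2.le⟩
      have hφC2z : ContDiffAt ℝ 2 (fun y => lam * φ y) z :=
        contDiffAt_const.mul ((hφ_C2 z hzIcc).contDiffAt (Icc_mem_nhds hz.1 hz.2))
      refine ⟨deriv (fun τ => u τ z) s, hdiff.hasDerivAt.sub_const (lam * φ z),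
        hC2.sub hφC2z, ?_⟩
      show deriv (deriv (fun y => u s y - lam * φ y)) z + Vm * L * (u s z - lam * φ z) ≤
        deriv (fun τ => u τ z) s
      have e1 : deriv (deriv (fun y => u s y - lam * φ y)) z =
          deriv (deriv (u s)) z - lam * deriv (deriv φ) z := by
        rw [deriv2_sub hC2 hφC2z]
        congr 1
        have h1 : (deriv fun y => lam * φ y) = fun y => lam * deriv φ y :=
          funext fun y => deriv_const_mul_field lam
        rw [h1]
        exact deriv_const_mul_field lam
      rw [e1, heq]
      -- goal: deriv2 u - lam φ'' + K w ≤ deriv2 u + V z * F(u)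
      have hss := hsubsol lam hlam z hz
      have hu_in := huB s ⟨hs0.le, hst'⟩ z hzIcc
      have hφ_in := hφB z hzIcc
      have hlip := hLip (u s z) hu_in (lam * φ z) hφ_in
      have hwneg' : u s z < lam * φ z := by linarith [hwn]
      have habs : |u s z - lam * φ z| = lam * φ z - u s z := by
        rw [abs_of_neg (by linarith)]; ring
      rw [habs] at hlip
      have s1 : -(L * (lam * φ z - u s z)) ≤
          u s z * Real.log (1 + u s z) ^ a - (lam * φ z) * Real.log (1 + lam * φ z) ^ a := by
        have := (abs_le.1 hlip).1
        linarith
      have hVz_nn : 0 ≤ V z := hV_nonneg z hzIcc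
      have hVz_le : V z ≤ Vm := by
        have := hVm z hzIcc; rw [Real.norm_eq_abs] at this
        exact le_trans (le_abs_self _) this
      have s2 : V z * -(L * (lam * φ z - u s z)) ≤
          V z * (u s z * Real.log (1 + u s z) ^ a - (lam * φ z) * Real.log (1 + lam * φ z) ^ a) :=
        mul_le_mul_of_nonneg_left s1 hVz_nn
      have s3 : Vm * -(L * (lam * φ z - u s z)) ≤ V z * -(L * (lam * φ z - u s z)) := by
        apply mul_le_mul_of_nonpos_right hVz_le
        have : 0 ≤ L * (lam * φ z - u s z) := mul_nonneg hL0 (by linarith)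
        linarith
      have s4 : Vm * L * (u s z - lam * φ z) = Vm * -(L * (lam * φ z - u s z)) := by ring
      linarith [s2, s3, s4, hss]
  -- Claim 2 : monotonicity in time
  have claim2 : ∀ t1 t2 : ℝ, 0 < t1 → t1 ≤ t2 → (t2 : EReal) < T →
      ∀ y ∈ Icc (-1:ℝ) 1, u t1 y ≤ u t2 y := by
    intro t1 t2 ht1 ht12 ht2T y hy
    rcases eq_or_lt_of_le ht12 with he | hlt
    · rw [he]
    set h : ℝ := t2 - t1 with hhdef
    have hh : 0 < h := by simp [hhdef]; linarith
    have hsubset : Icc 0 t2 ×ˢ Icc (-1:ℝ) 1 ⊆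
        {q : ℝ × ℝ | 0 ≤ q.1 ∧ (q.1 : EReal) < T ∧ q.2 ∈ Icc (-1:ℝ) 1} := by
      rintro ⟨s, z⟩ ⟨hs, hz⟩
      exact ⟨hs.1, lt_of_le_of_lt (EReal.coe_le_coe_iff.2 hs.2) ht2T, hz⟩
    obtain ⟨Bu, hBu⟩ := (isCompact_Icc.prod isCompact_Icc).exists_bound_of_continuousOn
      (hu_cont.mono hsubset)
    have hBu0 : 0 ≤ Bu := le_trans (norm_nonneg _)
      (hBu (0, 0) ⟨⟨le_refl _, (by linarith : (0:ℝ) ≤ t2)⟩, by norm_num⟩)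
    have huB : ∀ s ∈ Icc (0:ℝ) t2, ∀ z ∈ Icc (-1:ℝ) 1, u s z ∈ Icc (0:ℝ) Bu := by
      intro s hs z hz
      refine ⟨hu_nn s hs.1 (lt_of_le_of_lt (EReal.coe_le_coe_iff.2 hs.2) ht2T) z hz, ?_⟩
      have := hBu (s, z) ⟨hs, hz⟩
      rw [Real.norm_eq_abs] at this
      exact le_trans (le_abs_self _) this
    obtain ⟨L, hL0, hLip⟩ := f_lip ha1.le hBu0
    have key := max_principle (T' := t1) (K := Vm * L) ht1
      (fun s z => u (s + h) z - u s z) ?_ ?_ ?_ ?_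
    · have := key t1 ⟨ht1.le, le_refl _⟩ y hy
      have he2 : t1 + h = t2 := by simp [hhdef]
      rw [he2] at this
      linarith
    · apply ContinuousOn.sub
      · apply hu_cont.comp ((continuous_fst.add continuous_const).prodMk
          continuous_snd).continuousOn
        rintro ⟨s, z⟩ ⟨hs, hz⟩
        refine ⟨?_, ?_, hz⟩
        · show (0:ℝ) ≤ s + h
          linarith [hs.1, hh.le]
        · show ((s + h : ℝ) : EReal) < T
          exact lt_of_le_of_lt (EReal.coe_le_coe_iff.2 (by linarith [hs.2] : s + h ≤ t2)) ht2T
      · exact hu_cont.mono (fun q hq => hsubset ⟨⟨hq.1.1, by linarith [hq.1.2]⟩, hq.2⟩)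
    · intro z hz
      have hhT : (h : EReal) < T := lt_of_le_of_lt (EReal.coe_le_coe_iff.2 (by linarith : h ≤ t2)) ht2T
      have := claim1 h hh.le hhT z hz
      show 0 ≤ u (0 + h) z - u 0 z
      rw [zero_add, hu_ic z hz]
      linarith
    · intro s hs
      show 0 ≤ u (s + h) (-1) - u s (-1) ∧ 0 ≤ u (s + h) 1 - u s 1
      have hshT : ((s + h : ℝ) : EReal) < T :=
        lt_of_le_of_lt (EReal.coe_le_coe_iff.2 (by linarith [hs.2] : s + h ≤ t2)) ht2T
      have hsT : (s : EReal) < T :=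
        lt_of_le_of_lt (EReal.coe_le_coe_iff.2 (by linarith [hs.2] : s ≤ t2)) ht2T
      obtain ⟨hb1, hb2⟩ := hu_bc (s + h) (by linarith [hs.1]) hshT
      have hz1 : u s (-1) = 0 ∧ u s 1 = 0 := by
        rcases eq_or_lt_of_le hs.1 with hs0 | hs0
        · rw [← hs0, hu_ic (-1) ⟨le_refl _, by norm_num⟩, hu_ic 1 ⟨by norm_num, le_refl _⟩,
            hφ1, hφm1]
          norm_num
        · exact hu_bc s hs0 hsT
      rw [hb1, hb2, hz1.1, hz1.2]
      norm_num
    · intro s hs0 hst1 z hz hwneg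
      have hwn : u (s + h) z - u s z < 0 := hwneg
      have hshT : ((s + h : ℝ) : EReal) < T :=
        lt_of_le_of_lt (EReal.coe_le_coe_iff.2 (by linarith : s + h ≤ t2)) ht2T
      have hsT : (s : EReal) < T :=
        lt_of_le_of_lt (EReal.coe_le_coe_iff.2 (by linarith : s ≤ t2)) ht2T
      obtain ⟨hd1, hC21, heq1⟩ := hu_pde (s + h) (by linarith) hshT z hz
      obtain ⟨hd2, hC22, heq2⟩ := hu_pde s hs0 hsT z hz
      have hzIcc : z ∈ Icc (-1:ℝ) 1 := ⟨hz.1.le, hz.2.le⟩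
      have hshift : HasDerivAt (fun τ => u (τ + h) z) (deriv (fun τ => u τ z) (s + h)) s :=
        HasDerivAt.comp_add_const s h hd1.hasDerivAt
      refine ⟨deriv (fun τ => u τ z) (s + h) - deriv (fun τ => u τ z) s,
        hshift.sub hd2.hasDerivAt, hC21.sub hC22, ?_⟩
      show deriv (deriv (fun y => u (s + h) y - u s y)) z + Vm * L * (u (s + h) z - u s z) ≤
        deriv (fun τ => u τ z) (s + h) - deriv (fun τ => u τ z) s
      have e1 : deriv (deriv (fun y => u (s + h) y - u s y)) z =
          deriv (deriv (u (s + h))) z - deriv (deriv (u s)) z := deriv2_sub hC21 hC22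
      rw [e1, heq1, heq2]
      have hb_in := huB (s + h) ⟨by linarith, by linarith⟩ z hzIcc
      have hc_in := huB s ⟨hs0.le, by linarith⟩ z hzIcc
      have hlip := hLip (u (s + h) z) hb_in (u s z) hc_in
      have hwneg' : u (s + h) z < u s z := by linarith [hwn]
      have habs : |u (s + h) z - u s z| = u s z - u (s + h) z := by
        rw [abs_of_neg (by linarith)]; ring
      rw [habs] at hlip
      have s1 : -(L * (u s z - u (s + h) z)) ≤
          u (s + h) z * Real.log (1 + u (s + h) z) ^ a - u s z * Real.log (1 + u s z) ^ a := by
        have := (abs_le.1 hlip).1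
        linarith
      have hVz_nn : 0 ≤ V z := hV_nonneg z hzIcc
      have hVz_le : V z ≤ Vm := by
        have := hVm z hzIcc; rw [Real.norm_eq_abs] at this
        exact le_trans (le_abs_self _) this
      have s2 : V z * -(L * (u s z - u (s + h) z)) ≤
          V z * (u (s + h) z * Real.log (1 + u (s + h) z) ^ a -
            u s z * Real.log (1 + u s z) ^ a) :=
        mul_le_mul_of_nonneg_left s1 hVz_nn
      have s3 : Vm * -(L * (u s z - u (s + h) z)) ≤ V z * -(L * (u s z - u (s + h) z)) := by
        apply mul_le_mul_of_nonpos_right hVz_le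
        have : 0 ≤ L * (u s z - u (s + h) z) := mul_nonneg hL0 (by linarith)
        linarith
      have s4 : Vm * L * (u (s + h) z - u s z) = Vm * -(L * (u s z - u (s + h) z)) := by ring
      linarith [s2, s3, s4]
  -- conclusion
  intro t ht htT x hx
  obtain ⟨hdiff, -, -⟩ := hu_pde t ht htT x hx
  have hopen : {s : ℝ | (s : EReal) < T} ∈ 𝓝 t :=
    (isOpen_Iio.preimage continuous_coe_real_ereal).mem_nhds htT
  obtain ⟨ε, hε, hball⟩ := Metric.mem_nhds_iff.1 hopen
  apply deriv_nonneg_right hε hdiff.hasDerivAt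
  intro s hs
  have hsT : (s : EReal) < T := by
    apply hball
    rw [mem_ball, Real.dist_eq, abs_lt]
    constructor <;> linarith [hs.1, hs.2]
  exact claim2 t s ht hs.1.le hsT x ⟨hx.1.le, hx.2.le⟩
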